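/- Let A be a unitary operator on a Hilbert space H with A|j,0,0̄⟩ = α₀|j,x_j⟩|V₀⟩ + α₁|j,x̄_j⟩|V₁⟩ where |α₁|² ≤ ε and |V₀⟩, |V₁⟩ are unit vectors. Define A' = (I ⊗ A⁻¹) ∘ CNOT ∘ (I ⊗ A) where CNOT maps |b,j,x,w⟩ ↦ |b⊕x, j, x, w⟩ (acting with b as an extra control register). Then A'|b⟩|j,0,0̄⟩ = |b⊕x_j⟩|j,0,0̄⟩ + |W⟩ with ‖|W⟩‖ = √(2|α₁|²) ≤ √(2ε). -/

import Mathlib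

/-- The embedding `|b⟩ ⊗ w` of a workspace vector `w` into the space
`ℂ² ⊗ E`, modeled as `PiLp 2 (fun _ : Bool => E)`. -/
noncomputable def emb {E : Type*} [NormedAddCommGroup E] [InnerProductSpace ℂ E]
    (b : Bool) (w : E) : PiLp 2 (fun _ : Bool => E) :=
  WithLp.toLp 2 (fun c => if c = b then w else 0)

theorem compute_copy_uncompute_cleanup
    {E : Type*} [NormedAddCommGroup E] [InnerProductSpace ℂ E]
    (xj : Bool) (b : Bool) (ε : ℝ) (hε : 0 ≤ ε)
    (α₀ α₁ : ℂ) (hnorm : ‖α₀‖ ^ 2 + ‖α₁‖ ^ 2 = 1) (hα₁ : ‖α₁‖ ^ 2 ≤ ε)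
    (A : E ≃ₗᵢ[ℂ] E) (ψ₀ v₀ v₁ : E)
    (hv₀ : ‖v₀‖ = 1) (hv₁ : ‖v₁‖ = 1) (hv : inner ℂ v₀ v₁ = (0 : ℂ))
    (hA : A ψ₀ = α₀ • v₀ + α₁ • v₁)
    (G : PiLp 2 (fun _ : Bool => E) ≃ₗᵢ[ℂ] PiLp 2 (fun _ : Bool => E))
    (hG₀ : ∀ c : Bool, G (emb c v₀) = emb (xor c xj) v₀)
    (hG₁ : ∀ c : Bool, G (emb c v₁) = emb (xor c (!xj)) v₁) :
    ∃ W : PiLp 2 (fun _ : Bool => E),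
      (fun φ : PiLp 2 (fun _ : Bool => E) =>
          (WithLp.toLp 2 (fun c => A.symm ((G (WithLp.toLp 2 (fun c' => A (φ c')))) c)) : PiLp 2 (fun _ : Bool => E)))
        (emb b ψ₀) = emb (xor b xj) ψ₀ + W ∧
      ‖W‖ = Real.sqrt (2 * ‖α₁‖ ^ 2) ∧ ‖W‖ ≤ Real.sqrt (2 * ε) := by

  classical
  set u : E := A.symm (α₁ • v₁) with hu
  have hψ : A.symm (α₀ • v₀ + α₁ • v₁) = ψ₀ := by
    rw [← hA]; simp
  have hW : ‖(emb (xor b (!xj)) u - emb (xor b xj) u : PiLp 2 (fun _ : Bool => E))‖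
      = Real.sqrt (2 * ‖α₁‖ ^ 2) := by
    have hnormW : ∀ c : Bool,
        ‖(emb (xor b (!xj)) u - emb (xor b xj) u : PiLp 2 (fun _ : Bool => E)) c‖ = ‖u‖ := by
      intro c
      have hne : xor b xj ≠ xor b (!xj) := by cases b <;> cases xj <;> simp
      have : ∀ c : Bool, c = xor b xj ∨ c = xor b (!xj) := by
        cases b <;> cases xj <;> decide
      rcases this c with h | h <;> subst h <;>
        simp [emb, hne, Ne.symm hne]
    have hu1 : ‖u‖ = ‖α₁‖ := by
      rw [hu]
      simp [norm_smul, hv₁]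
    rw [PiLp.norm_eq_of_L2]
    simp only [hnormW, hu1]
    rw [Finset.sum_const]
    simp
  refine ⟨emb (xor b (!xj)) u - emb (xor b xj) u, ?_, hW, ?_⟩
  · have h1 : (WithLp.toLp 2 (fun c' => A (emb b ψ₀ c')) : PiLp 2 (fun _ : Bool => E)) =
        α₀ • emb b v₀ + α₁ • emb b v₁ := by
      ext c'
      by_cases h : c' = b <;> simp [emb, h]
      exact hA
    have h2 : G (WithLp.toLp 2 (fun c' => A (emb b ψ₀ c'))) =
        α₀ • emb (xor b xj) v₀ + α₁ • emb (xor b (!xj)) v₁ := by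
      rw [h1, map_add, map_smul, map_smul, hG₀, hG₁]
    ext c
    simp only [h2]
    have hne : xor b xj ≠ xor b (!xj) := by cases b <;> cases xj <;> simp
    by_cases hc : c = xor b xj
    · subst hc
      have : (α₀ • emb (xor b xj) v₀ + α₁ • emb (xor b (!xj)) v₁) (xor b xj)
          = α₀ • v₀ := by
        simp [emb, hne]
      rw [this]
      have : A.symm (α₀ • v₀) = ψ₀ - u := by
        rw [hu, eq_sub_iff_add_eq, ← map_add, hψ]
      rw [this]
      simp [emb, hne, Ne.symm hne]
      abel
    · by_cases hc' : c = xor b (!xj)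
      · subst hc'
        have : (α₀ • emb (xor b xj) v₀ + α₁ • emb (xor b (!xj)) v₁) (xor b (!xj))
            = α₁ • v₁ := by
          simp [emb, Ne.symm hne]
        rw [this]
        simp [emb, hne, Ne.symm hne, hu]
      · exfalso
        cases b <;> cases xj <;> cases c <;> simp_all
  · rw [hW]
    apply Real.sqrt_le_sqrt; linarith
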